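/- Suppose there exists an n × k matrix L0 over F corresponding to a linear (m,n,X,f)-IC, let μ, δ ≥ 0 be integers, set N = k + μ + 2δ, and suppose q ≥ N + 1. Then there exists an (n + μ) × N matrix L over F such that: (i) for every i ∈ {1,…,m}, all x, x' ∈ F^n, g, g' ∈ F^μ, and all ξ, ξ' ∈ F^N of Hamming weight at most δ, if (x|g)L + ξ = (x'|g')L + ξ' and x_j = x'_j for all j ∈ X_i, then x_{f(i)} = x'_{f(i)}; and (ii) for every W ⊆ {1,…,N} with |W| ≤ μ, every b ∈ F^W, and every x ∈ F^n, the number of g ∈ F^μ with ((x|g)L)_W = b equals q^{μ − |W|}. (Thus for q ≥ κ_q + μ + 2δ + 1 there exists a (μ,t,δ)-strongly secure μ-randomized linear (m,n,X,f)-IC of length κ_q + μ + 2δ, which is optimal.) -/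

import Mathlib

open Polynomial

noncomputable def pvec19 {F : Type} [Field F] {M : ℕ} (a : Fin M → F) : F[X] :=
  ∑ s : Fin M, C (a s) * X ^ (s : ℕ)

lemma pvec19_coeff {F : Type} [Field F] {M : ℕ} (a : Fin M → F) (t : Fin M) :
    (pvec19 a).coeff t = a t := by
  rw [pvec19, finset_sum_coeff, Finset.sum_eq_single t]
  · simp [coeff_C_mul, coeff_X_pow]
  · intro s _ hs
    rw [coeff_C_mul, coeff_X_pow, if_neg (fun h => hs (Fin.ext h.symm)), mul_zero]
  · simp

lemma pvec19_degree {F : Type} [Field F] {M : ℕ} (a : Fin M → F) :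
    (pvec19 a).degree < M := by
  refine lt_of_le_of_lt (degree_sum_le _ _) ?_
  rw [Finset.sup_lt_iff (by exact_mod_cast WithBot.bot_lt_coe M)]
  intro s _
  exact lt_of_le_of_lt (degree_C_mul_X_pow_le _ _) (by exact_mod_cast s.isLt)

lemma pvec19_natDegree_lt {F : Type} [Field F] {M : ℕ} (a : Fin M → F)
    (h : pvec19 a ≠ 0) : (pvec19 a).natDegree < M :=
  (natDegree_lt_iff_degree_lt h).mpr (pvec19_degree a)

lemma eval_pvec19_append {F : Type} [Field F] {k μ : ℕ} (a : Fin k → F) (g : Fin μ → F)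
    (y : F) :
    eval y (pvec19 (Fin.append a g)) =
      (∑ s : Fin k, a s * y ^ (s : ℕ)) + ∑ t : Fin μ, g t * y ^ (k + (t : ℕ)) := by
  rw [pvec19, eval_finset_sum]
  simp only [eval_mul, eval_C, eval_pow, eval_X]
  rw [Fin.sum_univ_add]
  simp [Fin.append_left, Fin.append_right]

noncomputable def Lmat19 {F : Type} [Field F] {n k μ N : ℕ}
    (L0 : Matrix (Fin n) (Fin k) F) (α : Fin N → F) : Matrix (Fin (n + μ)) (Fin N) F :=
  Matrix.of fun p j =>
    Fin.append (fun i => ∑ s : Fin k, L0 i s * α j ^ (s : ℕ))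
      (fun t : Fin μ => α j ^ (k + (t : ℕ))) p

lemma vecMul_Lmat19 {F : Type} [Field F] {n k μ N : ℕ}
    (L0 : Matrix (Fin n) (Fin k) F) (α : Fin N → F) (x : Fin n → F) (g : Fin μ → F)
    (j : Fin N) :
    Matrix.vecMul (Fin.append x g) (Lmat19 L0 α) j =
      (∑ s : Fin k, Matrix.vecMul x L0 s * α j ^ (s : ℕ)) +
        ∑ t : Fin μ, g t * α j ^ (k + (t : ℕ)) := by
  simp only [Matrix.vecMul, dotProduct, Lmat19, Matrix.of_apply]
  rw [Fin.sum_univ_add]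
  simp only [Fin.append_left, Fin.append_right]
  congr 1
  simp only [Matrix.vecMul, dotProduct, Finset.mul_sum]
  rw [Finset.sum_comm]
  simp_rw [Finset.sum_mul, mul_assoc]

theorem stmt_19 {F : Type} [Field F] [Fintype F] {m n k μ δ : ℕ}
    (X : Fin m → Set (Fin n)) (f : Fin m → Fin n) (hf : ∀ i, f i ∉ X i)
    (L0 : Matrix (Fin n) (Fin k) F)
    (hL0 : ∀ i : Fin m, ∀ x x' : Fin n → F,
      Matrix.vecMul x L0 = Matrix.vecMul x' L0 →
      (∀ j ∈ X i, x j = x' j) → x (f i) = x' (f i))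
    (hq : k + μ + 2 * δ + 1 ≤ Fintype.card F) :
    ∃ L : Matrix (Fin (n + μ)) (Fin (k + μ + 2 * δ)) F,
      (∀ i : Fin m, ∀ x x' : Fin n → F, ∀ g g' : Fin μ → F,
        ∀ ξ ξ' : Fin (k + μ + 2 * δ) → F,
        Set.ncard (Function.support ξ) ≤ δ → Set.ncard (Function.support ξ') ≤ δ →
        Matrix.vecMul (Fin.append x g) L + ξ = Matrix.vecMul (Fin.append x' g') L + ξ' →
        (∀ j ∈ X i, x j = x' j) → x (f i) = x' (f i)) ∧
      (∀ W : Finset (Fin (k + μ + 2 * δ)), W.card ≤ μ →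
        ∀ b : Fin (k + μ + 2 * δ) → F, ∀ x : Fin n → F,
        Nat.card {g : Fin μ → F // ∀ j ∈ W, Matrix.vecMul (Fin.append x g) L j = b j} =
          Fintype.card F ^ (μ - W.card)) := by
  classical
  obtain ⟨e⟩ : Nonempty (Fin (k + μ + 2 * δ) ↪ Fˣ) :=
    Function.Embedding.nonempty_of_card_le (by rw [Fintype.card_fin, Fintype.card_units]; omega)
  set αv : Fin (k + μ + 2 * δ) → F := fun j => (e j : F) with hαv
  have hαinj : Function.Injective αv := fun a b h => e.injective (Units.ext h)
  have hα0 : ∀ j, αv j ≠ 0 := fun j => Units.ne_zero _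
  refine ⟨Lmat19 L0 αv, ?_, ?_⟩
  · -- part (i)
    intro i x x' g g' ξ ξ' hξ hξ' heq hX
    set c : Fin (k + μ) → F :=
      Fin.append (fun s => Matrix.vecMul x L0 s - Matrix.vecMul x' L0 s)
        (fun t => g t - g' t) with hc
    have heval : ∀ j : Fin (k + μ + 2 * δ), eval (αv j) (pvec19 c) =
        Matrix.vecMul (Fin.append x g) (Lmat19 L0 αv) j
          - Matrix.vecMul (Fin.append x' g') (Lmat19 L0 αv) j := by
      intro j
      rw [hc, eval_pvec19_append, vecMul_Lmat19, vecMul_Lmat19]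
      simp only [sub_mul]
      rw [Finset.sum_sub_distrib, Finset.sum_sub_distrib]
      ring
    set T : Finset (Fin (k + μ + 2 * δ)) :=
      (Function.support ξ).toFinset ∪ (Function.support ξ').toFinset with hTdef
    have hT : T.card ≤ 2 * δ := by
      refine (Finset.card_union_le _ _).trans ?_
      rw [← Set.ncard_eq_toFinset_card', ← Set.ncard_eq_toFinset_card']
      omega
    have hTc : k + μ ≤ Tᶜ.card := by
      rw [Finset.card_compl, Fintype.card_fin]; omega
    have hroot : ∀ j ∈ Tᶜ, eval (αv j) (pvec19 c) = 0 := by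
      intro j hj
      rw [Finset.mem_compl, hTdef, Finset.mem_union] at hj
      push_neg at hj
      have h1 : ξ j = 0 := by
        by_contra h; exact hj.1 (Set.mem_toFinset.mpr h)
      have h2 : ξ' j = 0 := by
        by_contra h; exact hj.2 (Set.mem_toFinset.mpr h)
      have h3 := congrFun heq j
      simp only [Pi.add_apply, h1, h2, add_zero] at h3
      rw [heval j, h3, sub_self]
    have hQ : pvec19 c = 0 := by
      by_cases h : pvec19 c = 0
      · exact h
      · refine Polynomial.eq_zero_of_natDegree_lt_card_of_eval_eq_zero (pvec19 c)
          (f := fun j : ↥(Tᶜ) => αv j.1)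
          (fun a b hab => Subtype.ext (hαinj hab)) (fun j => hroot j.1 j.2) ?_
        calc (pvec19 c).natDegree < k + μ := pvec19_natDegree_lt c h
          _ ≤ Fintype.card ↥(Tᶜ) := by rw [Fintype.card_coe]; exact hTc
    refine hL0 i x x' ?_ hX
    funext s
    have h4 := pvec19_coeff c (Fin.castAdd μ s)
    rw [hQ, coeff_zero, hc, Fin.append_left] at h4
    exact sub_eq_zero.mp h4.symm
  · -- part (ii)
    intro W hW b x
    set T : (Fin μ → F) →ₗ[F] (↥W → F) :=
      { toFun := fun g j => ∑ t : Fin μ, g t * αv j.1 ^ (k + (t : ℕ))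
        map_add' := by intro g g'; funext j; simp [add_mul, Finset.sum_add_distrib]
        map_smul' := by intro a g; funext j; simp [Finset.mul_sum, mul_assoc] } with hTdef
    have hTapp : ∀ (g : Fin μ → F) (j : ↥W),
        T g j = ∑ t : Fin μ, g t * αv j.1 ^ (k + (t : ℕ)) := fun g j => rfl
    have hsurj : Function.Surjective T := by
      intro c
      by_cases hWe : W = ∅
      · exact ⟨0, funext fun j => absurd j.2 (by simp [hWe])⟩
      · have hμpos : 1 ≤ μ :=
          le_trans (Finset.card_pos.mpr (Finset.nonempty_of_ne_empty hWe)) hW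
        have hinjW : Set.InjOn αv W := fun a _ b _ h => hαinj h
        set r : Fin (k + μ + 2 * δ) → F := fun j =>
          if h : j ∈ W then c ⟨j, h⟩ * (αv j ^ k)⁻¹ else 0 with hr
        set G := Lagrange.interpolate W αv r with hG
        have hdeg : G.natDegree < μ := by
          by_cases hG0 : G = 0
          · rw [hG0]; simpa using (show 0 < μ from hμpos)
          · exact lt_of_lt_of_le ((natDegree_lt_iff_degree_lt hG0).mpr
              (Lagrange.degree_interpolate_lt _ hinjW)) hW
        refine ⟨fun t => G.coeff t, ?_⟩
        funext j
        rw [hTapp]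
        have hsplit : ∀ t : Fin μ, G.coeff t * αv j.1 ^ (k + (t : ℕ))
            = αv j.1 ^ k * (G.coeff t * αv j.1 ^ (t : ℕ)) := by
          intro t; rw [pow_add]; ring
        rw [Finset.sum_congr rfl (fun t _ => hsplit t), ← Finset.mul_sum]
        have hsum : ∑ t : Fin μ, G.coeff t * αv j.1 ^ (t : ℕ) = eval (αv j.1) G := by
          rw [eval_eq_sum_range' hdeg]
          exact Fin.sum_univ_eq_sum_range (fun i => G.coeff i * αv j.1 ^ i) μ
        have hevalG : eval (αv j.1) G = r j.1 :=
          Lagrange.eval_interpolate_at_node _ hinjW j.2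
        rw [hsum, hevalG, hr]
        simp only [j.2, dif_pos, Subtype.coe_eta]
        rw [mul_comm (c j), ← mul_assoc, mul_inv_cancel₀ (pow_ne_zero _ (hα0 _)), one_mul]
    set c0 : ↥W → F :=
      fun j => b j.1 - ∑ s : Fin k, Matrix.vecMul x L0 s * αv j.1 ^ (s : ℕ) with hc0
    have hiff : ∀ g : Fin μ → F,
        (∀ j ∈ W, Matrix.vecMul (Fin.append x g) (Lmat19 L0 αv) j = b j) ↔ T g = c0 := by
      intro g
      constructor
      · intro h
        funext j
        have h1 := h j.1 j.2
        rw [vecMul_Lmat19] at h1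
        show T g j = b j.1 - ∑ s : Fin k, Matrix.vecMul x L0 s * αv j.1 ^ (s : ℕ)
        rw [hTapp]
        linear_combination h1
      · intro h j hj
        have h2 : (∑ t : Fin μ, g t * αv j ^ (k + (t : ℕ)))
            = b j - ∑ s : Fin k, Matrix.vecMul x L0 s * αv j ^ (s : ℕ) :=
          congrFun h ⟨j, hj⟩
        rw [vecMul_Lmat19]
        linear_combination h2
    obtain ⟨g0, hg0⟩ := hsurj c0
    have e1 : {g : Fin μ → F //
        ∀ j ∈ W, Matrix.vecMul (Fin.append x g) (Lmat19 L0 αv) j = b j}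
        ≃ ↥(LinearMap.ker T) :=
      { toFun := fun p => ⟨p.1 - g0, by
          rw [LinearMap.mem_ker, map_sub, (hiff p.1).mp p.2, hg0, sub_self]⟩
        invFun := fun p => ⟨p.1 + g0, (hiff _).mpr (by
          rw [map_add, LinearMap.mem_ker.mp p.2, zero_add, hg0])⟩
        left_inv := fun p => by simp
        right_inv := fun p => by simp }
    rw [Nat.card_congr e1]
    have hrange : LinearMap.range T = ⊤ := LinearMap.range_eq_top.mpr hsurj
    have hrk : Module.finrank F (↥(LinearMap.ker T)) = μ - W.card := by
      have h1 := LinearMap.finrank_range_add_finrank_ker T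
      rw [hrange, finrank_top, Module.finrank_pi, Module.finrank_pi,
        Fintype.card_fin, Fintype.card_coe] at h1
      omega
    have bas := (Module.finBasis F (↥(LinearMap.ker T))).equivFun
    rw [Nat.card_congr bas.toEquiv, hrk]
    simp [Nat.card_eq_fintype_card, Fintype.card_fun, Fintype.card_fin]
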